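/- Let A and B be C*-algebras and φ : B → A a completely positive contractive map. Then for all x, y ∈ B, ‖φ(xy) − φ(x)φ(y)‖ ≤ ‖φ(xx*) − φ(x)φ(x*)‖^{1/2} · ‖y‖. -/

import Mathlib

open scoped BigOperators

open Filter Topology
/-- A (linear) map between `ℂ`-star-algebras is completely positive if it is
linear and for all `k`, all `b : Fin k → B` and `v : Fin k → A`, the element
`∑ i j, v i * φ (b i * b j) * v j` is positive. -/
def IsCompletelyPositive {B A : Type*}
    [NonUnitalRing B] [StarRing B] [Module ℂ B]
    [NonUnitalRing A] [StarRing A] [PartialOrder A] [Module ℂ A] (φ : B → A) : Prop :=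
  (∀ x y, φ (x + y) = φ x + φ y) ∧ (∀ (c : ℂ) (x : B), φ (c • x) = c • φ x) ∧
    ∀ (k : ℕ) (b : Fin k → B) (v : Fin k → A),
      0 ≤ ∑ i, ∑ j, star (v i) * φ (star (b i) * b j) * v j

section AuxCPC

noncomputable def myOrder (B : Type*) [NonUnitalCStarAlgebra B] : PartialOrder B :=
  letI := CStarAlgebra.spectralOrder (Unitization ℂ B)
  PartialOrder.lift (fun b => (b : Unitization ℂ B)) Unitization.inr_injective

lemma myOrderedRing (B : Type*) [NonUnitalCStarAlgebra B] :
    @StarOrderedRing B _ (myOrder B) _ := by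
  letI := CStarAlgebra.spectralOrder (Unitization ℂ B)
  haveI := CStarAlgebra.spectralOrderedRing (Unitization ℂ B)
  letI := myOrder B
  refine StarOrderedRing.of_le_iff fun x y => ?_
  constructor
  · intro h
    have h' : (x : Unitization ℂ B) ≤ (y : Unitization ℂ B) := h
    have hd : 0 ≤ ((y - x : B) : Unitization ℂ B) := by
      rw [Unitization.inr_sub]; exact sub_nonneg.2 h'
    have hsa : IsSelfAdjoint (y - x) := by
      have h1 := (IsSelfAdjoint.of_nonneg hd).star_eq
      rw [← Unitization.inr_star] at h1
      exact Unitization.inr_injective h1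
    have hspec : ∀ t ∈ quasispectrum ℝ (y - x), 0 ≤ t := by
      rw [Unitization.quasispectrum_eq_spectrum_inr' ℝ ℂ]
      exact fun t ht => spectrum_nonneg_of_nonneg hd ht
    set s := cfcₙ (fun t : ℝ => Real.sqrt t) (y - x) with hs_def
    have hs : IsSelfAdjoint s := cfcₙ_predicate _ _
    refine ⟨s, ?_⟩
    have key : star s * s = y - x := by
      rw [hs.star_eq, hs_def, ← cfcₙ_mul _ _ (y - x)
        (Real.continuous_sqrt.continuousOn) (Real.sqrt_zero)
        (Real.continuous_sqrt.continuousOn) (Real.sqrt_zero)]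
      have hcg : cfcₙ (fun t : ℝ => Real.sqrt t * Real.sqrt t) (y - x)
          = cfcₙ (id : ℝ → ℝ) (y - x) :=
        cfcₙ_congr (fun t ht => Real.mul_self_sqrt (hspec t ht))
      rw [hcg, cfcₙ_id ℝ _ hsa]
    rw [key]; abel
  · rintro ⟨s, rfl⟩
    show (x : Unitization ℂ B) ≤ ((x + star s * s : B) : Unitization ℂ B)
    rw [Unitization.inr_add, Unitization.inr_mul, Unitization.inr_star]
    exact le_add_of_nonneg_right (star_mul_self_nonneg _)
section Aux

variable {B A : Type*} [NonUnitalCStarAlgebra B] [NonUnitalCStarAlgebra A]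
  [PartialOrder A] [StarOrderedRing A] {φ : B → A}

lemma aux_sandwich {C : Type*} [NonUnitalCStarAlgebra C] [PartialOrder C] [StarOrderedRing C]
    {l : Filter C} (hl : l.IsIncreasingApproximateUnit) (m : C) :
    Tendsto (fun e => e * m * e) l (𝓝 m) := by
  have h0 : Tendsto (fun e : C => m * e - m) l (𝓝 0) := by
    simpa using (hl.tendsto_mul_left m).sub_const m
  have h1 : Tendsto (fun e : C => e * (m * e) - e * m) l (𝓝 0) := by
    apply squeeze_zero_norm' (a := fun e : C => ‖m * e - m‖)
    · filter_upwards [hl.eventually_norm] with e he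
      calc ‖e * (m * e) - e * m‖ = ‖e * (m * e - m)‖ := by rw [mul_sub]
        _ ≤ ‖e‖ * ‖m * e - m‖ := norm_mul_le _ _
        _ ≤ 1 * ‖m * e - m‖ := mul_le_mul_of_nonneg_right he (norm_nonneg _)
        _ = ‖m * e - m‖ := one_mul _
    · simpa using h0.norm
  have h2 : Tendsto (fun e : C => e * m - m) l (𝓝 0) := by
    simpa using (hl.tendsto_mul_right m).sub_const m
  have hfun : (fun e : C => e * m * e)
      = fun e : C => (e * (m * e) - e * m) + (e * m - m) + m := by
    funext e; rw [mul_assoc]; abel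
  rw [hfun]
  simpa using (h1.add h2).add_const m

lemma aux_phi_zero (hadd : ∀ x y, φ (x + y) = φ x + φ y) : φ 0 = 0 := by
  have h := hadd 0 0
  rw [add_zero] at h
  nth_rewrite 1 [← add_zero (φ 0)] at h
  exact (add_left_cancel h).symm

lemma aux_phi_sub (hadd : ∀ x y, φ (x + y) = φ x + φ y) (x y : B) :
    φ (x - y) = φ x - φ y := by
  have := hadd (x - y) y
  rw [sub_add_cancel] at this
  exact eq_sub_of_add_eq this.symm

lemma aux_cont (hadd : ∀ x y, φ (x + y) = φ x + φ y) (hcontr : ∀ x, ‖φ x‖ ≤ ‖x‖) :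
    Continuous φ := by
  refine (LipschitzWith.of_dist_le_mul (K := 1) fun x y => ?_).continuous
  rw [dist_eq_norm, dist_eq_norm, ← aux_phi_sub hadd]
  simpa using hcontr (x - y)

lemma aux_sa (hcp : IsCompletelyPositive φ) (c : B) : IsSelfAdjoint (φ (star c * c)) := by
  obtain ⟨hadd, hsmul, hpos⟩ := hcp
  set z := φ (star c * c) with hz
  have h1 : ∀ a : A, 0 ≤ star a * z * a := fun a => by
    have := hpos 1 ![c] ![a]
    simpa [Fin.sum_univ_one] using this
  have h2 : ∀ a : A, star a * (z - star z) * a = 0 := fun a => by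
    have h3 := (IsSelfAdjoint.of_nonneg (h1 a)).star_eq
    have h4 : star a * star z * a = star a * z * a := by
      calc star a * star z * a = star (star a * z * a) := by
            simp [star_mul, mul_assoc]
        _ = star a * z * a := h3
    rw [mul_sub, sub_mul, h4, sub_self]
  set l := CStarAlgebra.approximateUnit A
  have hl := CStarAlgebra.increasingApproximateUnit A
  haveI := hl.neBot
  have ht : Tendsto (fun e : A => e * (z - star z) * e) l (𝓝 (z - star z)) :=
    aux_sandwich hl _
  have ht0 : Tendsto (fun e : A => e * (z - star z) * e) l (𝓝 0) := by
    refine Tendsto.congr' ?_ tendsto_const_nhds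
    filter_upwards [hl.eventually_star_eq] with e he
    rw [← h2 e, he]
  have hzz : z - star z = 0 := tendsto_nhds_unique ht ht0
  rw [IsSelfAdjoint, ← sub_eq_zero, ← neg_sub, neg_eq_zero]
  exact hzz

lemma aux_flip (hcp : IsCompletelyPositive φ) (p q : B) :
    star (φ (star p * q)) = φ (star q * p) := by
  obtain ⟨hadd, hsmul, -⟩ := id hcp
  set u := φ (star p * q) with hu
  set v := φ (star q * p) with hv
  -- E1
  have exp1 : star (p + q) * (p + q)
      = star p * p + (star p * q + (star q * p + star q * q)) := by
    simp only [star_add, add_mul, mul_add]; abel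
  have E1 : star u + star v = u + v := by
    have h := (aux_sa hcp (p + q)).star_eq
    rw [exp1, hadd, hadd, hadd, star_add, star_add, star_add,
      (aux_sa hcp p).star_eq, (aux_sa hcp q).star_eq] at h
    have h1 := add_left_cancel h
    rw [← add_assoc, ← add_assoc] at h1
    exact add_right_cancel h1
  -- E2
  have exp2 : star (p + Complex.I • q) * (p + Complex.I • q)
      = star p * p + (Complex.I • (star p * q) + ((-Complex.I) • (star q * p) + star q * q)) := by
    simp only [star_add, star_smul, add_mul, mul_add, smul_mul_assoc, mul_smul_comm,
      smul_smul, Complex.star_def, Complex.conj_I, neg_mul, Complex.I_mul_I, neg_neg,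
      one_smul, neg_smul]
    match_scalars <;> simp [Complex.I_sq]
  have E2 : star u - star v = -u + v := by
    have h := (aux_sa hcp (p + Complex.I • q)).star_eq
    rw [exp2, hadd, hadd, hadd, hsmul, hsmul, star_add, star_add, star_add,
      (aux_sa hcp p).star_eq, (aux_sa hcp q).star_eq, star_smul, star_smul] at h
    have h1 := add_left_cancel h
    rw [← add_assoc, ← add_assoc] at h1
    have h2 := add_right_cancel h1
    -- h2 : star I • star u + star (-I) • star v = I • u + (-I) • v
    have h3 := congrArg (fun w : A => Complex.I • w) h2
    simp only [smul_add, smul_smul, Complex.star_def, Complex.conj_I, map_neg,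
      Complex.I_mul_I, neg_neg, mul_neg, neg_mul, one_smul, neg_smul] at h3
    simp only [smul_neg, smul_smul, Complex.I_mul_I, neg_smul, one_smul, neg_neg] at h3
    rw [sub_eq_add_neg]
    exact h3
  have half : ∀ w : A, (2⁻¹ : ℂ) • (w + w) = w := fun w => by
    rw [← two_smul ℂ, smul_smul]; norm_num
  have h2 : star u + star u = v + v := by
    calc star u + star u = (star u + star v) + (star u - star v) := by abel
      _ = (u + v) + (-u + v) := by rw [E1, E2]
      _ = v + v := by abel
  rw [← half (star u), h2, half]

end Aux

section Aux2
variable {B A : Type*} [NonUnitalCStarAlgebra B] [NonUnitalCStarAlgebra A]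
  [PartialOrder A] [StarOrderedRing A] {φ : B → A}


lemma aux_star_pres [PartialOrder B] [StarOrderedRing B]
    (hcp : IsCompletelyPositive φ) (hcontr : ∀ x, ‖φ x‖ ≤ ‖x‖) (b : B) :
    φ (star b) = star (φ b) := by
  obtain ⟨hadd, hsmul, -⟩ := id hcp
  have hcont := aux_cont hadd hcontr
  set l := CStarAlgebra.approximateUnit B with hl_def
  have hl := CStarAlgebra.increasingApproximateUnit B
  haveI : l.NeBot := hl.neBot
  have t1 : Tendsto (fun e : B => φ (star b * e)) l (𝓝 (φ (star b))) :=
    (hcont.tendsto (star b)).comp (hl.tendsto_mul_left (star b))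
  have t3 : Tendsto (fun e : B => star (φ (e * b))) l (𝓝 (star (φ b))) :=
    (continuous_star.tendsto (φ b)).comp ((hcont.tendsto b).comp (hl.tendsto_mul_right b))
  have t2 : Tendsto (fun e : B => φ (star b * e)) l (𝓝 (star (φ b))) := by
    refine t3.congr' ?_
    filter_upwards [hl.eventually_star_eq] with e he
    rw [← aux_flip hcp e b, he]
  exact tendsto_nhds_unique t1 t2

lemma aux_ksg [PartialOrder B] [StarOrderedRing B]
    (hcp : IsCompletelyPositive φ) (hcontr : ∀ x, ‖φ x‖ ≤ ‖x‖)
    (k : ℕ) (b : Fin k → B) (v : Fin k → A) :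
    star (∑ i, φ (b i) * v i) * (∑ i, φ (b i) * v i)
      ≤ ∑ i, ∑ j, star (v i) * φ (star (b i) * b j) * v j := by
  obtain ⟨hadd, hsmul, hpos⟩ := id hcp
  have hcont := aux_cont hadd hcontr
  set c := ∑ i, φ (b i) * v i with hc
  set S := ∑ i, ∑ j, star (v i) * φ (star (b i) * b j) * v j with hS
  set l := CStarAlgebra.approximateUnit B with hl_def
  have hl := CStarAlgebra.increasingApproximateUnit B
  haveI : l.NeBot := hl.neBot
  set T : B → A := fun e => (∑ i, star (v i) * φ (star (b i) * e)) * c with hT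
  have hTstar : ∀ e : B, star (T e) = star c * ∑ i, φ (star e * b i) * v i := by
    intro e
    rw [hT]
    simp only [star_mul]
    congr 1
    rw [star_sum]
    exact Finset.sum_congr rfl fun i _ => by rw [star_mul, star_star, aux_flip hcp (b i) e]
  have key : ∀ᶠ e in l, 0 ≤ S - T e - star (T e) + star c * c := by
    filter_upwards [hl.eventually_star_eq, hl.eventually_norm] with e hse hne
    have h0 := hpos (k+1) (Fin.snoc b e) (Fin.snoc v (-c))
    simp only [Fin.sum_univ_castSucc, Fin.snoc_castSucc, Fin.snoc_last] at h0
    have h1 : ∑ x : Fin k, star (v x) * φ (star (b x) * e) * -c = -(T e) := by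
      rw [hT]
      simp only [mul_neg]
      rw [Finset.sum_neg_distrib, ← Finset.sum_mul]
    have h2 : ∑ x : Fin k, star (-c) * φ (star e * b x) * v x = -(star (T e)) := by
      rw [hTstar e]
      simp only [star_neg, neg_mul, mul_assoc]
      rw [Finset.sum_neg_distrib, ← Finset.mul_sum]
    have h3 : star (-c) * φ (star e * e) * -c = star c * φ (star e * e) * c := by
      simp only [star_neg, neg_mul, mul_neg, neg_neg]
    rw [Finset.sum_add_distrib, h1, h2, h3, ← hS] at h0
    have hQ : star c * φ (star e * e) * c ≤ star c * c := by
      have hsae : IsSelfAdjoint (φ (star e * e)) := aux_sa hcp e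
      have hnorm1 : ‖φ (star e * e)‖ ≤ 1 := by
        refine (hcontr _).trans ?_
        calc ‖star e * e‖ ≤ ‖star e‖ * ‖e‖ := norm_mul_le _ _
          _ = ‖e‖ * ‖e‖ := by rw [norm_star]
          _ ≤ 1 := by nlinarith [norm_nonneg e]
      calc star c * φ (star e * e) * c ≤ ‖φ (star e * e)‖ • (star c * c) :=
            CStarAlgebra.star_left_conjugate_le_norm_smul hsae
        _ ≤ (1:ℝ) • (star c * c) :=
            smul_le_smul_of_nonneg_right hnorm1 (star_mul_self_nonneg c)
        _ = star c * c := one_smul _ _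
    calc (0:A) ≤ S + -(T e) + (-(star (T e)) + star c * φ (star e * e) * c) := h0
      _ = S - T e - star (T e) + star c * φ (star e * e) * c := by abel
      _ ≤ S - T e - star (T e) + star c * c := add_le_add_right hQ _
  have tsum : Tendsto (fun e : B => ∑ i, star (v i) * φ (star (b i) * e)) l (𝓝 (star c)) := by
    have hval : ∑ i, star (v i) * star (φ (b i)) = star c := by
      rw [hc, star_sum]
      exact Finset.sum_congr rfl fun i _ => (star_mul _ _).symm
    rw [← hval]
    refine tendsto_finset_sum _ fun i _ => ?_
    have h1 := (hcont.tendsto (star (b i))).comp (hl.tendsto_mul_left (star (b i)))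
    rw [aux_star_pres hcp hcontr (b i)] at h1
    exact h1.const_mul (star (v i))
  have tT : Tendsto T l (𝓝 (star c * c)) := tsum.mul_const c
  have tTs : Tendsto (fun e : B => star (T e)) l (𝓝 (star c * c)) := by
    have h := (continuous_star.tendsto (star c * c)).comp tT
    have : star (star c * c) = star c * c := by simp [star_mul]
    rw [this] at h
    exact h
  have tAll : Tendsto (fun e : B => S - T e - star (T e) + star c * c) l
      (𝓝 (S - star c * c)) := by
    have h := (((tendsto_const_nhds (x := S) (f := l)).sub tT).sub tTs).add
      (tendsto_const_nhds (x := star c * c))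
    have hv : S - star c * c - (star c * c) + star c * c = S - star c * c := by abel
    rw [hv] at h
    exact h
  have hmem := (CStarAlgebra.isClosed_nonneg (A := A)).mem_of_tendsto tAll
    (key.mono fun e he => he)
  exact sub_nonneg.mp hmem

lemma aux_mks0 [PartialOrder B] [StarOrderedRing B]
    (hcp : IsCompletelyPositive φ) (hcontr : ∀ x, ‖φ x‖ ≤ ‖x‖) (p q : B) (a : A) :
    0 ≤ star a * (φ (star p * p) - star (φ p) * φ p) * a
        - star a * (φ (star p * q) - star (φ p) * φ q)
        - (φ (star q * p) - star (φ q) * φ p) * a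
        + (φ (star q * q) - star (φ q) * φ q) := by
  set l := CStarAlgebra.approximateUnit A with hl_def
  have hl := CStarAlgebra.increasingApproximateUnit A
  haveI : l.NeBot := hl.neBot
  set F : A → A := fun e =>
    star a * φ (star p * p) * a - star a * (φ (star p * q) * e)
      - e * (φ (star q * p) * a) + e * φ (star q * q) * e
      - (star a * star (φ p) - e * star (φ q)) * (φ p * a - φ q * e) with hF
  have key : ∀ᶠ e in l, 0 ≤ F e := by
    filter_upwards [hl.eventually_star_eq] with e hse
    have h := aux_ksg hcp hcontr 2 ![p, q] ![a, -e]
    have h' := sub_nonneg.mpr h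
    refine h'.trans_eq ?_
    rw [hF]
    simp only [Fin.sum_univ_two, Matrix.cons_val_zero, Matrix.cons_val_one, Matrix.head_cons,
      star_neg, star_add, mul_neg, neg_mul, neg_neg, hse, star_sub, star_mul, star_star]
    noncomm_ring
  have t1 : Tendsto (fun e : A => φ (star p * q) * e) l (𝓝 (φ (star p * q))) :=
    hl.tendsto_mul_left _
  have t2 : Tendsto (fun e : A => e * (φ (star q * p) * a)) l (𝓝 (φ (star q * p) * a)) :=
    hl.tendsto_mul_right _
  have t3 : Tendsto (fun e : A => e * φ (star q * q) * e) l (𝓝 (φ (star q * q))) :=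
    aux_sandwich hl _
  have t4 : Tendsto (fun e : A => φ q * e) l (𝓝 (φ q)) := hl.tendsto_mul_left _
  have h5 : Tendsto (fun e : A => φ p * a - φ q * e) l (𝓝 (φ p * a - φ q)) :=
    tendsto_const_nhds.sub t4
  have t6 : Tendsto (fun e : A => e * star (φ q)) l (𝓝 (star (φ q))) := hl.tendsto_mul_right _
  have h6 : Tendsto (fun e : A => star a * star (φ p) - e * star (φ q)) l
      (𝓝 (star a * star (φ p) - star (φ q))) := tendsto_const_nhds.sub t6
  have tc : Tendsto (fun e : A => (star a * star (φ p) - e * star (φ q)) * (φ p * a - φ q * e)) l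
      (𝓝 ((star a * star (φ p) - star (φ q)) * (φ p * a - φ q))) := h6.mul h5
  have tF : Tendsto F l (𝓝 (star a * φ (star p * p) * a - star a * φ (star p * q)
      - φ (star q * p) * a + φ (star q * q)
      - (star a * star (φ p) - star (φ q)) * (φ p * a - φ q))) := by
    rw [hF]
    exact ((((tendsto_const_nhds (x := star a * φ (star p * p) * a)).sub
      (t1.const_mul (star a))).sub t2).add t3).sub tc
  have hX := (CStarAlgebra.isClosed_nonneg (A := A)).mem_of_tendsto tF
    (key.mono fun e he => he)
  refine hX.trans_eq ?_
  noncomm_ring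

lemma aux_mks [PartialOrder B] [StarOrderedRing B]
    (hcp : IsCompletelyPositive φ) (hcontr : ∀ x, ‖φ x‖ ≤ ‖x‖) (p q : B) (a : A) (t : ℝ) :
    0 ≤ star a * (φ (star p * p) - star (φ p) * φ p) * a
        - t • (star a * (φ (star p * q) - star (φ p) * φ q))
        - t • ((φ (star q * p) - star (φ q) * φ p) * a)
        + (t * t) • (φ (star q * q) - star (φ q) * φ q) := by
  obtain ⟨hadd, hsmul, -⟩ := id hcp
  have hsmulR : ∀ (r : ℝ) (z : B), φ (r • z) = r • φ z := fun r z => by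
    rw [← Complex.coe_smul, hsmul, Complex.coe_smul]
  have h := aux_mks0 hcp hcontr p (t • q) a
  have e2 : star (t • q) = t • star q := by rw [star_smul, star_trivial]
  rw [mul_smul_comm, e2, smul_mul_assoc, smul_mul_assoc, mul_smul_comm, smul_smul,
    hsmulR, hsmulR, hsmulR, hsmulR] at h
  refine h.trans_eq ?_
  simp only [star_smul, star_trivial, smul_mul_assoc, mul_smul_comm, smul_smul,
    mul_sub, sub_mul, smul_sub, mul_assoc]

end Aux2

end AuxCPC

/-- For a completely positive contractive map `φ : B → A` between
C*-algebras, `‖φ(xy) - φ(x)φ(y)‖ ≤ ‖φ(xx*) - φ(x)φ(x*)‖^{1/2} ⬝ ‖y‖`. -/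
theorem cpc_multiplicative_domain_estimate {B A : Type*}
    [NonUnitalCStarAlgebra B] [NonUnitalCStarAlgebra A]
    [PartialOrder A] [StarOrderedRing A]
    (φ : B → A) (hcp : IsCompletelyPositive φ) (hcontr : ∀ x, ‖φ x‖ ≤ ‖x‖) :
    ∀ x y : B, ‖φ (x * y) - φ x * φ y‖ ≤
      Real.sqrt ‖φ (x * star x) - φ x * φ (star x)‖ * ‖y‖ := by
  intro x y
  obtain ⟨hadd, hsmul, -⟩ := id hcp
  letI : PartialOrder B := myOrder B
  haveI : StarOrderedRing B := myOrderedRing B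
  by_cases hy : y = 0
  · subst hy
    simp [aux_phi_zero hadd, mul_nonneg, Real.sqrt_nonneg]
  have hy' : 0 < ‖y‖ := norm_pos_iff.2 hy
  have hsp : ∀ b : B, φ (star b) = star (φ b) := aux_star_pres hcp hcontr
  have h1 : star (φ (star x)) = φ x := by rw [← hsp (star x), star_star]
  set u0 := φ (x * y) - φ x * φ y with hu0
  set D := φ (x * star x) - φ x * φ (star x) with hD
  set Gqq := φ (star y * y) - star (φ y) * φ y with hGqq
  have hGqq0 : 0 ≤ Gqq := by
    rw [hGqq, sub_nonneg]
    simpa using aux_mks0 hcp hcontr y y 0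
  have hGqqn : ‖Gqq‖ ≤ ‖y‖ * ‖y‖ := by
    have hle : Gqq ≤ φ (star y * y) := sub_le_self _ (star_mul_self_nonneg _)
    calc ‖Gqq‖ ≤ ‖φ (star y * y)‖ := CStarAlgebra.norm_le_norm_of_nonneg_of_le hGqq0 hle
      _ ≤ ‖star y * y‖ := hcontr _
      _ = ‖y‖ * ‖y‖ := CStarRing.norm_star_mul_self
  have hw : 0 ≤ star u0 * u0 := star_mul_self_nonneg u0
  have hDsa : IsSelfAdjoint D := by
    rw [hD]
    show star (φ (x * star x) - φ x * φ (star x)) = _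
    rw [star_sub, star_mul (φ x) (φ (star x)), h1, ← hsp x, ← hsp (x * star x),
      star_mul x (star x), star_star]
  have hGpp : φ (star (star x) * star x) - star (φ (star x)) * φ (star x) = D := by
    rw [star_star, h1]
  have hGpq : φ (star (star x) * y) - star (φ (star x)) * φ y = u0 := by
    rw [star_star, h1]
  have hGqp : φ (star y * star x) - star (φ y) * φ (star x) = star u0 := by
    rw [hu0, star_sub, star_mul (φ x) (φ y), ← hsp x, ← hsp (x * y), star_mul x y]
  have hkey : ∀ t : ℝ, ‖D‖ < t → ‖u0‖ * ‖u0‖ ≤ t * (‖y‖ * ‖y‖) := by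
    intro t ht
    have ht0 : 0 < t := lt_of_le_of_lt (norm_nonneg D) ht
    have h := aux_mks hcp hcontr (star x) y u0 t
    rw [hGpp, hGpq, hGqp, ← hGqq] at h
    have hconj : star u0 * D * u0 ≤ t • (star u0 * u0) :=
      (CStarAlgebra.star_left_conjugate_le_norm_smul hDsa).trans
        (smul_le_smul_of_nonneg_right ht.le hw)
    have h3 : t • (star u0 * u0) + t • (star u0 * u0)
        ≤ star u0 * D * u0 + (t * t) • Gqq := by
      calc t • (star u0 * u0) + t • (star u0 * u0)
          = 0 + (t • (star u0 * u0) + t • (star u0 * u0)) := by rw [zero_add]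
        _ ≤ (star u0 * D * u0 - t • (star u0 * u0) - t • (star u0 * u0) + (t * t) • Gqq)
              + (t • (star u0 * u0) + t • (star u0 * u0)) := add_le_add_left h _
        _ = star u0 * D * u0 + (t * t) • Gqq := by abel
    have h2 : t • (star u0 * u0) ≤ (t * t) • Gqq := by
      have h4 := h3.trans (add_le_add_left hconj ((t * t) • Gqq))
      exact (add_le_add_iff_left (t • (star u0 * u0))).mp h4
    have h5 : star u0 * u0 ≤ t • Gqq := by
      rw [mul_smul] at h2
      exact (smul_le_smul_iff_of_pos_left ht0).mp h2
    calc ‖u0‖ * ‖u0‖ = ‖star u0 * u0‖ := CStarRing.norm_star_mul_self.symm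
      _ ≤ ‖t • Gqq‖ := CStarAlgebra.norm_le_norm_of_nonneg_of_le hw h5
      _ = |t| * ‖Gqq‖ := by rw [norm_smul, Real.norm_eq_abs]
      _ = t * ‖Gqq‖ := by rw [abs_of_pos ht0]
      _ ≤ t * (‖y‖ * ‖y‖) := mul_le_mul_of_nonneg_left hGqqn ht0.le
  have hsq : ‖u0‖ * ‖u0‖ ≤ ‖D‖ * (‖y‖ * ‖y‖) := by
    by_contra hcon
    push_neg at hcon
    have hY : 0 < ‖y‖ * ‖y‖ := mul_pos hy' hy'
    have hDlt : ‖D‖ < ‖u0‖ * ‖u0‖ / (‖y‖ * ‖y‖) := (lt_div_iff₀ hY).2 hcon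
    obtain ⟨s, hs1, hs2⟩ := exists_between hDlt
    have h6 := hkey s hs1
    have h7 : s * (‖y‖ * ‖y‖) < ‖u0‖ * ‖u0‖ := (lt_div_iff₀ hY).1 hs2
    exact absurd (h6.trans_lt h7) (lt_irrefl _)
  calc ‖u0‖ = Real.sqrt (‖u0‖ * ‖u0‖) := (Real.sqrt_mul_self (norm_nonneg _)).symm
    _ ≤ Real.sqrt (‖D‖ * (‖y‖ * ‖y‖)) := Real.sqrt_le_sqrt hsq
    _ = Real.sqrt ‖D‖ * Real.sqrt (‖y‖ * ‖y‖) := Real.sqrt_mul (norm_nonneg _) _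
    _ = Real.sqrt ‖D‖ * ‖y‖ := by rw [Real.sqrt_mul_self (norm_nonneg _)]
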